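/- Let α ∈ (0,1). There is a constant c₁₄ = c₁₄(d) > 0 such that for every real r > r_2, with K = K(r), the event C¹_K(r^α) is contained in the event {|L_K| ≥ c₁₄ r^{αd}}; that is, for every γ ∈ C¹_K(r^α), the K-clump of the origin contains at least c₁₄ r^{αd} sites. -/

import Mathlib

open MeasureTheory ENNReal

noncomputable section

/-- Sites: the lattice `ℤ^d`. -/
abbrev Site (d : ℕ) := Fin d → ℤ

/-- Configurations: elements of `{0,1}^{ℤ^d}`, encoded with `Bool`. -/
abbrev Config (d : ℕ) := Site d → Bool

/-- The translation `θ^z` acting on configurations: `(θ^z γ)(x) = γ(x - z)`. -/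
def shiftCfg {d : ℕ} (z : Site d) (γ : Config d) : Config d := fun x => γ (x - z)

/-- `φ` is a matching on `γ`: an involutive bijection matching ones to zeros. -/
def IsMatching {d : ℕ} (γ : Config d) (φ : Site d → Site d) : Prop :=
  Function.Bijective φ ∧ (∀ x, φ (φ x) = x) ∧ ∀ x, γ (φ x) = !(γ x)

/-- `Φ` is a matching rule with respect to the measure `P`. -/
def IsMatchingRule {d : ℕ} (P : Measure (Config d)) (Φ : Config d → Site d → Site d) : Prop :=
  (∀ x : Site d, Measurable fun γ => Φ γ x) ∧ ∀ᵐ γ ∂P, IsMatching γ (Φ γ)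

/-- `Φ` is translation-equivariant with respect to `P`. -/
def IsEquivariant {d : ℕ} (P : Measure (Config d)) (Φ : Config d → Site d → Site d) : Prop :=
  ∀ z x : Site d, ∀ᵐ γ ∂P, Φ (shiftCfg z γ) (x + z) = Φ γ x + z

/-- `P` is the product measure with i.i.d. Bernoulli(1/2) coordinates, characterized by
its values on cylinder events. -/
def IsBernoulliHalfProduct {d : ℕ} (P : Measure (Config d)) : Prop :=
  IsProbabilityMeasure P ∧
    ∀ (s : Finset (Site d)) (f : Site d → Bool),
      P {γ | ∀ x ∈ s, γ x = f x} = (1 / 2 : ℝ≥0∞) ^ s.card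

/-- `Z_Φ(γ) = ‖Φ(γ, 0)‖`, the `ℓ^∞` distance from the origin to its partner. -/
def ZΦ {d : ℕ} (Φ : Config d → Site d → Site d) (γ : Config d) : ℝ := ‖Φ γ 0‖

/-- Embedding of the lattice in `ℝ^d`. -/
def toR {d : ℕ} (x : Site d) : Fin d → ℝ := fun i => (x i : ℝ)

/-- The first standard basis vector `e₁`. -/
def e1 (d : ℕ) : Site d := fun i => if (i : ℕ) = 0 then 1 else 0

/-- `x` is a `k`-seed for `γ`. -/
def IsSeed {d : ℕ} (γ : Config d) (k : ℕ) (x : Site d) : Prop :=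
  γ x = true ∧ ∀ n : ℕ, 1 ≤ n → n ≤ k - 1 → γ (x + (n : ℤ) • e1 d) = false

/-- `r_k = (2^k k²)^{1/d} + 1/2`. -/
def rr (d k : ℕ) : ℝ := ((2 : ℝ) ^ k * (k : ℝ) ^ 2) ^ ((d : ℝ)⁻¹) + 1 / 2

/-- The shift `s_k = ⌊100 r_k⌋ e₁`. -/
def ss (d k : ℕ) : Site d := ⌊(100 : ℝ) * rr d k⌋ • e1 d

/-- `W_k(γ)`: the union of all `k`-cutters. -/
def cutters {d : ℕ} (γ : Config d) (k : ℕ) : Set (Fin d → ℝ) :=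
  ⋃ x ∈ {x : Site d | IsSeed γ k (x - ss d k)}, {y : Fin d → ℝ | ‖y - toR x‖ = rr d k}

/-- The `k`-blob containing the point `p ∈ ℝ^d`: the connected component of `p` in the
complement of all `j`-cutters with `j > k`. -/
def blob {d : ℕ} (γ : Config d) (k : ℕ) (p : Fin d → ℝ) : Set (Fin d → ℝ) :=
  connectedComponentIn (⋃ j ∈ {j : ℕ | k < j}, cutters γ j)ᶜ p

/-- The `k`-clump of a site `x`: the lattice points of the `k`-blob containing `x`. -/
def clump {d : ℕ} (γ : Config d) (k : ℕ) (x : Site d) : Set (Site d) :=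
  {y : Site d | toR y ∈ blob γ k (toR x)}

/-- The event `E_k`: the cube `S(-s_k, r_k - 1)` contains a `k`-seed. -/
def Ek (d k : ℕ) : Set (Config d) :=
  {γ | ∃ y : Site d, IsSeed γ k y ∧ ‖toR y + toR (ss d k)‖ ≤ rr d k - 1}

/-- A `k`-seed lying in the annulus `S(-s_k, r_k + s) \ S(-s_k, r_k - s)`. -/
def SeedInAnnulus {d : ℕ} (γ : Config d) (k : ℕ) (s : ℝ) (y : Site d) : Prop :=
  IsSeed γ k y ∧ ‖toR y + toR (ss d k)‖ ≤ rr d k + s ∧ rr d k - s < ‖toR y + toR (ss d k)‖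

/-- The event `U_k(s)`: `S(-s_k, r_k + s) \ S(-s_k, r_k - s)` contains a `k`-seed. -/
def Uk (d : ℕ) (k : ℕ) (s : ℝ) : Set (Config d) :=
  {γ | ∃ y : Site d, SeedInAnnulus γ k s y}

/-- The event `C_k(s) = ∪_{j ≥ k} U_j(s)`. -/
def Ck (d : ℕ) (k : ℕ) (s : ℝ) : Set (Config d) :=
  {γ | ∃ j : ℕ, k ≤ j ∧ γ ∈ Uk d j s}

/-- `±1`-valued spin `2γ(x) - 1`. -/
def pm1 {d : ℕ} (γ : Config d) (y : Site d) : ℤ := if γ y then 1 else -1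

/-- `Φ` matches maximally within clumps: a.s. every clump is finite and the number of
sites of each `k`-clump `L` matched outside `L` equals `|Σ_{x ∈ L} (2γ(x) - 1)|`. -/
def MatchesMaximally {d : ℕ} (P : Measure (Config d))
    (Φ : Config d → Site d → Site d) : Prop :=
  ∀ᵐ γ ∂P, ∀ k : ℕ, 1 ≤ k → ∀ x : Site d,
    (clump γ k x).Finite ∧
      (({y ∈ clump γ k x | Φ γ y ∉ clump γ k x}.ncard : ℤ)
        = |∑ᶠ y ∈ clump γ k x, pm1 γ y|)


/-- The event `C¹_k(a)`: for every `j ≥ k` the annulus `A_j` contains at most one `j`-seed,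
and there is exactly one `j ≥ k` whose annulus `A_j` contains a `j`-seed. -/
def C1 (d k : ℕ) (a : ℝ) : Set (Config d) :=
  {γ | (∀ j : ℕ, k ≤ j → ∀ y y' : Site d,
          SeedInAnnulus γ j a y → SeedInAnnulus γ j a y' → y = y') ∧
       (∃! j : ℕ, k ≤ j ∧ ∃ y : Site d, SeedInAnnulus γ j a y)}

/-- The event `C²_k(a) = C_k(a) \ C¹_k(a)`. -/
def C2 (d k : ℕ) (a : ℝ) : Set (Config d) := Ck d k a \ C1 d k a


lemma toR_add {d : ℕ} (a b : Site d) : toR (a + b) = toR a + toR b := by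
  funext i; simp [toR]

lemma toR_sub {d : ℕ} (a b : Site d) : toR (a - b) = toR a - toR b := by
  funext i; simp [toR]

lemma toR_zero {d : ℕ} : toR (0 : Site d) = 0 := by
  funext i; simp [toR]

lemma exists_norm_toR_eq_nat {d : ℕ} (hd : 1 ≤ d) (z : Site d) : ∃ m : ℕ, ‖toR z‖ = m := by
  have hne : (Finset.univ : Finset (Fin d)).Nonempty := ⟨⟨0, hd⟩, Finset.mem_univ _⟩
  obtain ⟨i, -, hi⟩ := Finset.exists_mem_eq_sup Finset.univ hne (fun b => ‖toR z b‖₊)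
  refine ⟨(z i).natAbs, ?_⟩
  have h1 : ‖toR z‖ = ‖toR z i‖ := by
    rw [Pi.norm_def, hi]; rfl
  rw [h1]
  rw [show toR z i = ((z i : ℤ) : ℝ) from rfl, Real.norm_eq_abs, ← Int.cast_abs,
    Int.abs_eq_natAbs]
  push_cast
  rw [Nat.cast_natAbs, Int.cast_abs]

lemma rr_mono {d : ℕ} (hd : 1 ≤ d) {j k : ℕ} (h : j ≤ k) : rr d j ≤ rr d k := by
  unfold rr
  have h2 : ((2:ℝ)^j * (j:ℝ)^2) ≤ (2:ℝ)^k * (k:ℝ)^2 := by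
    have := Nat.mul_le_mul (Nat.pow_le_pow_right (by norm_num : 1 ≤ 2) h)
      (Nat.pow_le_pow_left h 2)
    exact_mod_cast this
  have := Real.rpow_le_rpow (by positivity) h2 (by positivity : (0:ℝ) ≤ (d:ℝ)⁻¹)
  linarith

lemma rr_ne_nat {d : ℕ} (hd : 1 ≤ d) {j : ℕ} (hj : 1 ≤ j) (m : ℕ) : (m : ℝ) ≠ rr d j := by
  intro h
  have hA : (0:ℝ) ≤ (2:ℝ)^j * (j:ℝ)^2 := by positivity
  have h1 : ((2:ℝ)^j * (j:ℝ)^2) ^ ((d:ℝ)⁻¹) = (m:ℝ) - 1/2 := by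
    rw [rr] at h; linarith
  have h2 : (2:ℝ)^j * (j:ℝ)^2 = ((m:ℝ) - 1/2)^d := by
    rw [← h1, Real.rpow_inv_natCast_pow hA (by omega)]
  have h3 : ((2:ℝ))^(j+d) * (j:ℝ)^2 = ((2:ℝ)*(m:ℝ) - 1)^d := by
    have e : ((2:ℝ)*(m:ℝ) - 1)^d = 2^d * ((m:ℝ)-1/2)^d := by
      rw [← mul_pow]; ring_nf
    rw [e, ← h2, pow_add]; ring
  have h4 : ((2:ℤ)^(j+d) * (j:ℤ)^2) = (2*(m:ℤ) - 1)^d := by exact_mod_cast h3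
  have hdvd : (2:ℤ) ∣ (2*(m:ℤ)-1)^d := by
    rw [← h4]; exact Dvd.dvd.mul_right (dvd_pow_self 2 (by omega)) _
  have h5 : (2:ℤ) ∣ 2*(m:ℤ) - 1 := Int.Prime.dvd_pow' Nat.prime_two hdvd
  omega

set_option maxHeartbeats 1000000 in
/-- On the event `C¹_K(r^α)` the `K`-clump of the origin contains at least `c₁₄ r^{αd}`
sites. -/
theorem statement19 (d : ℕ) (hd : 1 ≤ d) (α : ℝ) (hα : α ∈ Set.Ioo (0 : ℝ) 1) :
    ∃ c₁₄ : ℝ, 0 < c₁₄ ∧ ∀ r : ℝ, rr d 2 < r → ∀ K : ℕ, 1 ≤ K →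
      rr d (K + 1) < r → r ≤ rr d (K + 2) →
      ∀ γ : Config d, γ ∈ C1 d K (r ^ α) →
        (clump γ K 0).Infinite ∨
          c₁₄ * r ^ (α * (d : ℝ)) ≤ ((clump γ K 0).ncard : ℝ) := by


  obtain ⟨hα0, hα1⟩ := hα
  have h1α : (0:ℝ) < 1 - α := by linarith
  set B : ℝ := (7:ℝ) ^ ((1 - α)⁻¹) with hB
  have hBpos : 0 < B := Real.rpow_pos_of_pos (by norm_num) _
  have hBexp : (0:ℝ) < B ^ (α * (d:ℝ)) := Real.rpow_pos_of_pos hBpos _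
  refine ⟨min ((1/2:ℝ)^d) (B ^ (α * (d:ℝ)))⁻¹, lt_min (by positivity) (by positivity), ?_⟩
  intro r hr2 K hK hrK1 hrK2 γ hγ
  by_cases hinf : (clump γ K 0).Infinite
  · exact Or.inl hinf
  right
  rw [Set.not_infinite] at hinf
  set ρ : ℝ := r ^ α with hρdef
  have hrr2 : rr d 2 = (16:ℝ)^((d:ℝ)⁻¹) + 1/2 := by unfold rr; norm_num
  have h16 : (1:ℝ) ≤ (16:ℝ)^((d:ℝ)⁻¹) := by
    calc (1:ℝ) = (16:ℝ) ^ (0:ℝ) := (Real.rpow_zero _).symm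
      _ ≤ (16:ℝ)^((d:ℝ)⁻¹) :=
        Real.rpow_le_rpow_of_exponent_le (by norm_num) (by positivity)
  have hr32 : (3/2:ℝ) < r := by rw [hrr2] at hr2; linarith
  have hr0 : (0:ℝ) < r := by linarith
  have hρ1 : 1 < ρ := by
    rw [hρdef]
    calc (1:ℝ) = r ^ (0:ℝ) := (Real.rpow_zero r).symm
      _ < r ^ α := Real.rpow_lt_rpow_of_exponent_lt (by linarith) hα0
  have hρ0 : 0 < ρ := by linarith
  have mem_cutters : ∀ (j : ℕ) (q : Fin d → ℝ), q ∈ cutters γ j ↔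
      ∃ x : Site d, IsSeed γ j (x - ss d j) ∧ ‖q - toR x‖ = rr d j := by
    intro j q
    simp [cutters, Set.mem_iUnion]
  have mem_F : ∀ q : Fin d → ℝ, q ∉ (⋃ j ∈ {j : ℕ | K < j}, cutters γ j) ↔
      ∀ j, K < j → q ∉ cutters γ j := by
    intro q
    simp only [Set.mem_iUnion, Set.mem_setOf_eq, not_exists, exists_prop, not_and]
  by_cases hstar : 3/2 * ρ ≤ rr d (K+1)
  case neg =>
    push_neg at hstar
    -- small r: it suffices that the clump is nonempty
    have hK1 : (1:ℝ) ≤ (K:ℝ) := by exact_mod_cast hK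
    have ha2 : rr d (K+2) ≤ (9/2) * rr d (K+1) := by
      unfold rr
      push_cast
      set A : ℝ := ((2:ℝ)^(K+1) * ((K:ℝ)+1)^2) ^ ((d:ℝ)⁻¹) with hA
      have hA0 : (0:ℝ) ≤ A := by rw [hA]; positivity
      have hle : ((2:ℝ)^(K+2) * ((K:ℝ)+2)^2)
          ≤ (9/2) * ((2:ℝ)^(K+1) * ((K:ℝ)+1)^2) := by
        have e1 : (2:ℝ)*((K:ℝ)+2)^2 ≤ (9/2)*((K:ℝ)+1)^2 := by nlinarith
        calc (2:ℝ)^(K+2) * ((K:ℝ)+2)^2 = (2:ℝ)^(K+1) * (2*((K:ℝ)+2)^2) := by ring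
          _ ≤ (2:ℝ)^(K+1) * ((9/2)*((K:ℝ)+1)^2) :=
            mul_le_mul_of_nonneg_left e1 (by positivity)
          _ = (9/2) * ((2:ℝ)^(K+1) * ((K:ℝ)+1)^2) := by ring
      have h9 : (((9/2:ℝ)) * ((2:ℝ)^(K+1) * ((K:ℝ)+1)^2)) ^ ((d:ℝ)⁻¹)
          = (9/2:ℝ)^((d:ℝ)⁻¹) * A :=
        Real.mul_rpow (by norm_num) (by positivity)
      have h92 : (9/2:ℝ)^((d:ℝ)⁻¹) ≤ 9/2 := by
        calc (9/2:ℝ)^((d:ℝ)⁻¹) ≤ (9/2:ℝ)^(1:ℝ) := by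
              apply Real.rpow_le_rpow_of_exponent_le (by norm_num)
              rw [inv_le_one_iff₀]
              right; exact_mod_cast hd
          _ = 9/2 := Real.rpow_one _
      have hmono := Real.rpow_le_rpow (by positivity) hle
        (by positivity : (0:ℝ) ≤ (d:ℝ)⁻¹)
      rw [h9] at hmono
      have : (9/2:ℝ)^((d:ℝ)⁻¹) * A ≤ (9/2) * A :=
        mul_le_mul_of_nonneg_right h92 hA0
      linarith
    have hrρ : r < (27/4) * ρ := by linarith
    have hr1α : r ^ (1-α) ≤ 7 := by
      have hsplit : r ^ (1-α) * ρ = r := by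
        rw [hρdef, ← Real.rpow_add hr0]
        norm_num
      have h' : r ^ (1-α) * ρ < (27/4) * ρ := by rw [hsplit]; exact hrρ
      have := lt_of_mul_lt_mul_right h' hρ0.le
      linarith
    have hrB : r ≤ B := by
      have h0 : (0:ℝ) ≤ r ^ (1-α) := Real.rpow_nonneg hr0.le _
      have h1 : (r ^ (1-α)) ^ ((1-α)⁻¹) ≤ (7:ℝ) ^ ((1-α)⁻¹) :=
        Real.rpow_le_rpow h0 hr1α (by positivity)
      rw [← Real.rpow_mul hr0.le, mul_inv_cancel₀ h1α.ne', Real.rpow_one] at h1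
      exact h1
    have hle1 : min ((1/2:ℝ)^d) (B ^ (α * (d:ℝ)))⁻¹ * r ^ (α * (d:ℝ)) ≤ 1 := by
      have h1 : r ^ (α * (d:ℝ)) ≤ B ^ (α * (d:ℝ)) :=
        Real.rpow_le_rpow hr0.le hrB (by positivity)
      calc min ((1/2:ℝ)^d) (B ^ (α * (d:ℝ)))⁻¹ * r ^ (α * (d:ℝ))
          ≤ (B ^ (α * (d:ℝ)))⁻¹ * B ^ (α*(d:ℝ)) := by
            apply mul_le_mul (min_le_right _ _) h1
              (Real.rpow_nonneg hr0.le _) (by positivity)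
        _ = 1 := inv_mul_cancel₀ hBexp.ne'
    have h0notF : toR (0 : Site d) ∈ (⋃ j ∈ {j : ℕ | K < j}, cutters γ j)ᶜ := by
      rw [Set.mem_compl_iff, mem_F]
      intro j hj hc
      rw [mem_cutters] at hc
      obtain ⟨x, -, hnorm⟩ := hc
      obtain ⟨m, hm⟩ := exists_norm_toR_eq_nat hd x
      have he : ‖toR (0:Site d) - toR x‖ = ‖toR x‖ := by
        rw [toR_zero, zero_sub, norm_neg]
      exact rr_ne_nat hd (j := j) (by omega) m (by rw [← hm, ← he]; exact hnorm)
    have h0mem : (0 : Site d) ∈ clump γ K 0 :=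
      mem_connectedComponentIn h0notF
    have hpos : 0 < (clump γ K 0).ncard := (Set.ncard_pos hinf).mpr ⟨0, h0mem⟩
    have hone1 : (1:ℝ) ≤ ((clump γ K 0).ncard : ℝ) := by exact_mod_cast hpos
    linarith
  case pos =>
    obtain ⟨hone, hex⟩ := hγ
    obtain ⟨j₀, ⟨hKj₀, y₀, hy₀⟩, huniq⟩ := hex
    have lemA : ∀ j, K < j → ∀ x : Site d, IsSeed γ j (x - ss d j) →
        ∀ q : Fin d → ℝ, ‖q - toR x‖ = rr d j → ‖q‖ < ρ →
        j = j₀ ∧ x = y₀ + ss d j₀ := by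
      intro j hKj x hx q hq hqρ
      have hub : ‖toR x‖ ≤ rr d j + ρ := by
        have h1 : ‖toR x‖ ≤ ‖toR x - q‖ + ‖q‖ := by
          calc ‖toR x‖ = ‖(toR x - q) + q‖ := by rw [sub_add_cancel]
            _ ≤ _ := norm_add_le _ _
        rw [norm_sub_rev, hq] at h1
        linarith
      have hlb : rr d j - ρ < ‖toR x‖ := by
        have h1 : ‖q - toR x‖ ≤ ‖q‖ + ‖toR x‖ := norm_sub_le _ _
        rw [hq] at h1; linarith
      have hann : SeedInAnnulus γ j ρ (x - ss d j) := by
        refine ⟨hx, ?_, ?_⟩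
        · rw [toR_sub, sub_add_cancel]; exact hub
        · rw [toR_sub, sub_add_cancel]; exact hlb
      have hj : j = j₀ := huniq j ⟨hKj.le, x - ss d j, hann⟩
      subst hj
      have hx' : x - ss d j = y₀ := hone j hKj.le _ _ hann hy₀
      exact ⟨rfl, by rw [← hx']; abel⟩
    suffices hp : ∃ p : Fin d → ℝ,
        ∀ q ∈ segment ℝ 0 p ∪ Metric.ball p (ρ/2), ∀ j, K < j → q ∉ cutters γ j by
      obtain ⟨p, hp⟩ := hp
      have hGconn : IsPreconnected (segment ℝ (0:Fin d → ℝ) p ∪ Metric.ball p (ρ/2)) :=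
        IsPreconnected.union p (right_mem_segment _ _ _)
          (Metric.mem_ball_self (by positivity))
          (convex_segment _ _).isPreconnected (convex_ball _ _).isPreconnected
      have hGF : (segment ℝ (0:Fin d → ℝ) p ∪ Metric.ball p (ρ/2)) ⊆
          (⋃ j ∈ {j : ℕ | K < j}, cutters γ j)ᶜ := by
        intro q hq
        rw [Set.mem_compl_iff, mem_F]
        exact fun j hj => hp q hq j hj
      have hGblob : (segment ℝ (0:Fin d → ℝ) p ∪ Metric.ball p (ρ/2)) ⊆
          blob γ K (toR 0) := by
        rw [toR_zero]
        exact hGconn.subset_connectedComponentIn (Or.inl (left_mem_segment ℝ _ _)) hGF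
      set n : ℕ := ⌈ρ⌉₊ - 1 with hn
      have hceil : 1 < ⌈ρ⌉₊ := by
        rw [Nat.lt_ceil]; exact_mod_cast hρ1
      have hn1 : 1 ≤ n := by omega
      have hncast : (n:ℝ) = (⌈ρ⌉₊ : ℝ) - 1 := by
        rw [hn]
        push_cast [Nat.cast_sub (by omega : 1 ≤ ⌈ρ⌉₊)]
        ring
      have hnρ : (n:ℝ) < ρ := by
        have := Nat.ceil_lt_add_one hρ0.le
        rw [hncast]; linarith
      have hρn : ρ/2 ≤ (n:ℝ) := by
        rcases le_or_gt ρ 2 with h | h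
        · have h1 : (1:ℝ) ≤ (n:ℝ) := by exact_mod_cast hn1
          linarith
        · have := Nat.le_ceil ρ
          rw [hncast]; linarith
      set T : Finset (Site d) :=
        Fintype.piFinset (fun i => Finset.Icc (⌊p i - ρ/2⌋ + 1) (⌊p i - ρ/2⌋ + n)) with hT
      have hTcard : T.card = n ^ d := by
        rw [hT, Fintype.card_piFinset]
        have hc : ∀ i : Fin d,
            (Finset.Icc (⌊p i - ρ/2⌋ + 1) (⌊p i - ρ/2⌋ + (n:ℤ))).card = n := by
          intro i
          rw [Int.card_Icc]
          omega
        simp only [hc, Finset.prod_const, Finset.card_univ, Fintype.card_fin]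
      have hTsub : ↑T ⊆ clump γ K 0 := by
        intro z hz
        rw [Finset.mem_coe, hT, Fintype.mem_piFinset] at hz
        have hball : toR z ∈ Metric.ball p (ρ/2) := by
          rw [mem_ball_iff_norm, pi_norm_lt_iff (by positivity : (0:ℝ) < ρ/2)]
          intro i
          have hzi := hz i
          rw [Finset.mem_Icc] at hzi
          have hfl := Int.floor_le (p i - ρ/2)
          have hfl2 := Int.lt_floor_add_one (p i - ρ/2)
          have h1 : (⌊p i - ρ/2⌋ : ℝ) + 1 ≤ ((z i : ℤ) : ℝ) := by exact_mod_cast hzi.1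
          have h2 : ((z i : ℤ) : ℝ) ≤ (⌊p i - ρ/2⌋ : ℝ) + (n:ℝ) := by exact_mod_cast hzi.2
          have habs : |((z i : ℤ) : ℝ) - p i| < ρ/2 := by
            rw [abs_lt]; constructor <;> linarith
          simpa [toR, Real.norm_eq_abs] using habs
        show toR z ∈ blob γ K (toR 0)
        exact hGblob (Or.inr hball)
      have hcard : ((n:ℝ))^d ≤ ((clump γ K 0).ncard : ℝ) := by
        have h := Set.ncard_le_ncard hTsub hinf
        rw [Set.ncard_coe_finset, hTcard] at h
        exact_mod_cast h
      have hrw : r ^ (α * (d:ℝ)) = ρ ^ d := by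
        rw [Real.rpow_mul hr0.le, Real.rpow_natCast]
      calc min ((1/2:ℝ)^d) (B ^ (α * (d:ℝ)))⁻¹ * r ^ (α * (d:ℝ))
          ≤ (1/2:ℝ)^d * ρ^d := by
            rw [hrw]
            exact mul_le_mul_of_nonneg_right (min_le_left _ _) (by positivity)
        _ = (ρ/2)^d := by rw [← mul_pow]; congr 1; ring
        _ ≤ ((n:ℝ))^d := pow_le_pow_left₀ (by positivity) hρn d
        _ ≤ _ := hcard
    by_cases hKlt : K < j₀
    case neg =>
      refine ⟨0, ?_⟩
      intro q hq j hj hc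
      have hqρ : ‖q‖ < ρ := by
        rcases hq with hs | hb
        · rw [segment_same] at hs
          simp only [Set.mem_singleton_iff] at hs
          rw [hs, norm_zero]; exact hρ0
        · rw [mem_ball_iff_norm, sub_zero] at hb
          linarith
      rw [mem_cutters] at hc
      obtain ⟨x, hx, hnorm⟩ := hc
      obtain ⟨hj', -⟩ := lemA j hj x hx q hnorm hqρ
      exact hKlt (hj' ▸ hj)
    case pos =>
      set X : Fin d → ℝ := toR (y₀ + ss d j₀) with hX
      set M : ℝ := ‖X‖ with hM
      set R : ℝ := rr d j₀ with hR
      have hXeq : toR y₀ + toR (ss d j₀) = X := by rw [hX, toR_add]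
      have hMub : M ≤ R + ρ := by rw [hM, ← hXeq]; exact hy₀.2.1
      have hMlb : R - ρ < M := by rw [hM, ← hXeq]; exact hy₀.2.2
      have hRK : 3/2 * ρ ≤ R := le_trans hstar (rr_mono hd (by omega : K+1 ≤ j₀))
      have hM2 : ρ/2 < M := by linarith
      have hM0 : 0 < M := by linarith
      have hMne : M ≠ R := by
        obtain ⟨m, hm⟩ := exists_norm_toR_eq_nat hd (y₀ + ss d j₀)
        have hm' : M = (m:ℝ) := by rw [hM, hX]; exact hm
        rw [hm']
        exact rr_ne_nat hd (by omega : 1 ≤ j₀) m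
      set c : ℝ := ρ / (2*M) with hc
      have hc0 : 0 < c := by rw [hc]; positivity
      have hc1 : c < 1 := by rw [hc, div_lt_one (by positivity)]; linarith
      have hcM : c * M = ρ/2 := by rw [hc]; field_simp
      have hsmulX : ∀ t : ℝ, ‖t • X - X‖ = |t - 1| * M := by
        intro t
        rw [show t • X - X = (t-1) • X by rw [sub_smul, one_smul],
          norm_smul, Real.norm_eq_abs, hM]
      have hnsmul : ∀ t : ℝ, ‖t • X‖ = |t| * M := by
        intro t
        rw [norm_smul, Real.norm_eq_abs, hM]
      have hsegment : ∀ (a : ℝ) (q : Fin d → ℝ), q ∈ segment ℝ 0 (a • X) →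
          ∃ t : ℝ, 0 ≤ t ∧ t ≤ 1 ∧ q = (t*a) • X := by
        intro a q hq
        rw [segment_eq_image] at hq
        obtain ⟨t, ht, hqe⟩ := hq
        rw [Set.mem_Icc] at ht
        refine ⟨t, ht.1, ht.2, ?_⟩
        rw [← hqe]
        show (1-t) • (0:Fin d → ℝ) + t • a • X = (t*a) • X
        rw [smul_zero, zero_add, smul_smul]
      rcases lt_or_gt_of_ne hMne with hMR | hMR
      · -- inside the cube: move towards the centre
        refine ⟨c • X, ?_⟩
        intro q hq j hj hcut
        rw [mem_cutters] at hcut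
        obtain ⟨x, hx, hnorm⟩ := hcut
        have hpn : ‖c • X‖ = ρ/2 := by rw [hnsmul, abs_of_pos hc0, hcM]
        have hqρ : ‖q‖ < ρ := by
          rcases hq with hs | hb
          · obtain ⟨t, ht0, ht1, rfl⟩ := hsegment c q hs
            rw [hnsmul, abs_of_nonneg (mul_nonneg ht0 hc0.le)]
            nlinarith
          · rw [mem_ball_iff_norm] at hb
            calc ‖q‖ = ‖(q - c • X) + c • X‖ := by rw [sub_add_cancel]
              _ ≤ ‖q - c • X‖ + ‖c • X‖ := norm_add_le _ _
              _ < ρ/2 + ρ/2 := by rw [hpn]; linarith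
              _ = ρ := by ring
        obtain ⟨hjj, hxx⟩ := lemA j hj x hx q hnorm hqρ
        subst hjj
        rw [hxx] at hnorm
        have hqX : ‖q - X‖ = R := hnorm
        have hlt : ‖q - X‖ < R := by
          rcases hq with hs | hb
          · obtain ⟨t, ht0, ht1, rfl⟩ := hsegment c q hs
            rw [hsmulX]
            have htc : t * c ≤ 1 := by nlinarith
            rw [abs_of_nonpos (by linarith)]
            nlinarith
          · rw [mem_ball_iff_norm] at hb
            have hpX : ‖c • X - X‖ = M - ρ/2 := by
              rw [hsmulX, abs_of_nonpos (by linarith), ← hcM]; ring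
            calc ‖q - X‖ = ‖(q - c • X) + (c • X - X)‖ := by rw [sub_add_sub_cancel]
              _ ≤ ‖q - c • X‖ + ‖c • X - X‖ := norm_add_le _ _
              _ < ρ/2 + (M - ρ/2) := by rw [hpX]; linarith
              _ = M := by ring
              _ < R := hMR
        linarith
      · -- outside the cube: move away from the centre
        refine ⟨(-c) • X, ?_⟩
        intro q hq j hj hcut
        rw [mem_cutters] at hcut
        obtain ⟨x, hx, hnorm⟩ := hcut
        have hpn : ‖(-c) • X‖ = ρ/2 := by
          rw [hnsmul, abs_neg, abs_of_pos hc0, hcM]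
        have hqρ : ‖q‖ < ρ := by
          rcases hq with hs | hb
          · obtain ⟨t, ht0, ht1, rfl⟩ := hsegment (-c) q hs
            rw [hnsmul]
            have : |t * (-c)| = t * c := by rw [mul_neg, abs_neg, abs_of_nonneg (by positivity)]
            rw [this]
            nlinarith
          · rw [mem_ball_iff_norm] at hb
            calc ‖q‖ = ‖(q - (-c) • X) + (-c) • X‖ := by rw [sub_add_cancel]
              _ ≤ ‖q - (-c) • X‖ + ‖(-c) • X‖ := norm_add_le _ _
              _ < ρ/2 + ρ/2 := by rw [hpn]; linarith
              _ = ρ := by ring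
        obtain ⟨hjj, hxx⟩ := lemA j hj x hx q hnorm hqρ
        subst hjj
        rw [hxx] at hnorm
        have hqX : ‖q - X‖ = R := hnorm
        have hgt : R < ‖q - X‖ := by
          rcases hq with hs | hb
          · obtain ⟨t, ht0, ht1, rfl⟩ := hsegment (-c) q hs
            rw [hsmulX]
            have h1 : t * (-c) - 1 ≤ -1 := by nlinarith
            rw [abs_of_nonpos (by linarith)]
            nlinarith
          · rw [mem_ball_iff_norm] at hb
            have hpX : ‖(-c) • X - X‖ = M + ρ/2 := by
              rw [hsmulX, abs_of_nonpos (by nlinarith), ← hcM]; ring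
            have htri : ‖(-c) • X - X‖ ≤ ‖(-c) • X - q‖ + ‖q - X‖ := by
              calc ‖(-c) • X - X‖ = ‖((-c) • X - q) + (q - X)‖ := by rw [sub_add_sub_cancel]
                _ ≤ _ := norm_add_le _ _
            rw [hpX, norm_sub_rev] at htri
            have : M + ρ/2 - ρ/2 < ‖q - X‖ + ρ/2 - ρ/2 := by linarith
            linarith
        linarith

end
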